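/- Let m ≥ 1, let A_1, …, A_m ∈ ℱ be events, ℋ_1, …, ℋ_m ⊆ ℱ sub-σ-algebras, σ ∈ (0,1] a constant, and Y : Ω → ℝ an integrable random variable. Set π_i := P[A_i | ℋ_i] for each i and assume: (i) π_i ≥ σ almost surely for every i; and (ii) for every i ∈ {1,…,m}, the random variables Y, the indicators 1_{A_j} for all j > i, and the conditional probabilities π_j for all j > i are ℋ_i-measurable. Then E[∏_{i=1}^m (1_{A_i} / π_i) · Y] = E[Y]. -/

import Mathlib

open MeasureTheory

/-- Telescoping recursive inverse probability weighting identity: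
`E[∏ᵢ (1_{Aᵢ} / πᵢ) · Y] = E[Y]` when each `πᵢ = P[Aᵢ | ℋᵢ] ≥ σ > 0` a.s. and,
for each `i`, `Y`, the indicators `1_{Aⱼ}` and the conditional probabilities
`πⱼ` for `j > i` are `ℋᵢ`-measurable. -/
theorem stmt_9 {Ω : Type*} [m0 : MeasurableSpace Ω]
    (μ : Measure Ω) [IsProbabilityMeasure μ]
    (m : ℕ) (hm : 1 ≤ m)
    (A : Fin m → Set Ω) (hA : ∀ i, MeasurableSet (A i))
    (H : Fin m → MeasurableSpace Ω) (hH : ∀ i, H i ≤ m0)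
    (σ : ℝ) (hσ0 : 0 < σ) (hσ1 : σ ≤ 1)
    (Y : Ω → ℝ) (hYint : Integrable Y μ)
    (π : Fin m → Ω → ℝ)
    (hπ : ∀ i, π i = μ[(A i).indicator (fun _ => (1 : ℝ)) | H i])
    (hbound : ∀ i, ∀ᵐ ω ∂μ, σ ≤ π i ω)
    (hYmeas : ∀ i, Measurable[H i] Y)
    (hAmeas : ∀ i j : Fin m, i < j → MeasurableSet[H i] (A j))
    (hπmeas : ∀ i j : Fin m, i < j → Measurable[H i] (π j)) :
    ∫ ω, (∏ i : Fin m, (A i).indicator (fun _ => (1 : ℝ)) ω / π i ω) * Y ω ∂μ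
      = ∫ ω, Y ω ∂μ := by
  set ind : Fin m → Ω → ℝ := fun i => (A i).indicator (fun _ => (1 : ℝ)) with hind
  have hπmeas0 : ∀ i, Measurable (π i) := fun i => by
    rw [hπ i]; exact (stronglyMeasurable_condExp.mono (hH i)).measurable
  have hindmeas : ∀ i, Measurable (ind i) := fun i => measurable_const.indicator (hA i)
  have hYm : Measurable Y := (hYmeas ⟨0, hm⟩).mono (hH ⟨0, hm⟩) le_rfl
  have hb : ∀ᵐ ω ∂μ, ∀ i, σ ≤ π i ω := ae_all_iff.2 hbound
  have h1σ : (1 : ℝ) ≤ σ⁻¹ := (one_le_inv_iff₀).2 ⟨hσ0, hσ1⟩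
  -- bound on products of indicators over inverse probabilities
  have hfac : ∀ ω, (∀ i, σ ≤ π i ω) → ∀ i, |ind i ω / π i ω| ≤ σ⁻¹ := by
    intro ω hω i
    rw [abs_div]
    have h1 : |ind i ω| ≤ 1 := by
      by_cases h : ω ∈ A i <;> simp [hind, Set.indicator, h]
    have h2 : σ ≤ |π i ω| := le_trans (hω i) (le_abs_self _)
    calc |ind i ω| / |π i ω| ≤ 1 / σ := div_le_div₀ zero_le_one h1 hσ0 h2
      _ = σ⁻¹ := one_div σ
  have hprodbound : ∀ ω, (∀ i, σ ≤ π i ω) → ∀ S : Finset (Fin m),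
      |∏ i ∈ S, ind i ω / π i ω| ≤ σ⁻¹ ^ m := by
    intro ω hω S
    have hcard : S.card ≤ m := by
      simpa [Finset.card_univ] using Finset.card_le_card (Finset.subset_univ S)
    calc |∏ i ∈ S, ind i ω / π i ω| = ∏ i ∈ S, |ind i ω / π i ω| :=
          (Finset.abs_prod S _)
      _ ≤ ∏ _i ∈ S, σ⁻¹ :=
          Finset.prod_le_prod (fun i _ => abs_nonneg _) (fun i _ => hfac ω hω i)
      _ = σ⁻¹ ^ S.card := Finset.prod_const _
      _ ≤ σ⁻¹ ^ m := pow_le_pow_right₀ h1σ hcard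
  have hprodbound2 : ∀ ω, (∀ i, σ ≤ π i ω) → ∀ T : Finset (Fin m),
      |∏ i ∈ T, (π i ω)⁻¹| ≤ σ⁻¹ ^ m := by
    intro ω hω T
    have hcard : T.card ≤ m := by
      simpa [Finset.card_univ] using Finset.card_le_card (Finset.subset_univ T)
    have hfac2 : ∀ i, |(π i ω)⁻¹| ≤ σ⁻¹ := by
      intro i
      have hpos : 0 < π i ω := lt_of_lt_of_le hσ0 (hω i)
      rw [abs_of_nonneg (inv_nonneg.2 hpos.le)]
      exact inv_anti₀ hσ0 (hω i)
    calc |∏ i ∈ T, (π i ω)⁻¹| = ∏ i ∈ T, |(π i ω)⁻¹| := (Finset.abs_prod T _)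
      _ ≤ ∏ _i ∈ T, σ⁻¹ :=
          Finset.prod_le_prod (fun i _ => abs_nonneg _) (fun i _ => hfac2 i)
      _ = σ⁻¹ ^ T.card := Finset.prod_const _
      _ ≤ σ⁻¹ ^ m := pow_le_pow_right₀ h1σ hcard
  -- integrability helper
  have hintegr : ∀ S T : Finset (Fin m),
      Integrable (fun ω => (∏ i ∈ S, ind i ω / π i ω)
        * ((∏ i ∈ T, (π i ω)⁻¹) * Y ω)) μ := by
    intro S T
    have hmeas : AEStronglyMeasurable (fun ω => (∏ i ∈ S, ind i ω / π i ω)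
        * ((∏ i ∈ T, (π i ω)⁻¹) * Y ω)) μ := by
      apply Measurable.aestronglyMeasurable
      exact (Finset.measurable_prod S fun i _ => (hindmeas i).div (hπmeas0 i)).mul
        ((Finset.measurable_prod T fun i _ => (hπmeas0 i).inv).mul hYm)
    refine Integrable.mono' (hYint.norm.const_mul (σ⁻¹ ^ m * σ⁻¹ ^ m)) hmeas ?_
    filter_upwards [hb] with ω hω
    have h1 := hprodbound ω hω S
    have h2 := hprodbound2 ω hω T
    rw [Real.norm_eq_abs, abs_mul, abs_mul]
    calc |∏ i ∈ S, ind i ω / π i ω| * (|∏ i ∈ T, (π i ω)⁻¹| * |Y ω|)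
        ≤ σ⁻¹ ^ m * (σ⁻¹ ^ m * |Y ω|) := by gcongr
      _ = σ⁻¹ ^ m * σ⁻¹ ^ m * ‖Y ω‖ := by rw [Real.norm_eq_abs]; ring
  -- the telescoping functions
  set g : ℕ → Ω → ℝ := fun k ω =>
    (∏ i ∈ Finset.univ.filter (fun i : Fin m => k ≤ (i : ℕ)), ind i ω / π i ω) * Y ω
    with hg
  have hstep : ∀ k, k < m → ∫ ω, g k ω ∂μ = ∫ ω, g (k + 1) ω ∂μ := by
    intro k hk
    set K : Fin m := ⟨k, hk⟩ with hK
    set S : Finset (Fin m) := Finset.univ.filter (fun i : Fin m => k + 1 ≤ (i : ℕ))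
      with hS
    have hfilter : Finset.univ.filter (fun i : Fin m => k ≤ (i : ℕ)) = insert K S := by
      ext i
      simp only [hS, Finset.mem_filter, Finset.mem_univ, true_and, Finset.mem_insert,
        hK, Fin.ext_iff]
      omega
    have hKS : K ∉ S := by simp [hS, hK]
    set W : Ω → ℝ := fun ω => (π K ω)⁻¹ * ((∏ i ∈ S, ind i ω / π i ω) * Y ω) with hW
    have hWm : Measurable[H K] W := by
      have hπK : Measurable[H K] (π K) := by
        rw [hπ K]; exact stronglyMeasurable_condExp.measurable
      refine hπK.inv.mul (Measurable.mul ?_ (hYmeas K))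
      refine Finset.measurable_prod S fun i hi => ?_
      have hKi : K < i := by
        simp only [hS, Finset.mem_filter, Finset.mem_univ, true_and] at hi
        exact Fin.lt_def.2 hi
      exact (measurable_const.indicator (hAmeas K i hKi)).div (hπmeas K i hKi)
    have hWsm : StronglyMeasurable[H K] W := hWm.stronglyMeasurable
    have hWind : Integrable (W * ind K) μ := by
      have heq : (W * ind K) = fun ω => (∏ i ∈ insert K S, ind i ω / π i ω)
          * ((∏ i ∈ (∅ : Finset (Fin m)), (π i ω)⁻¹) * Y ω) := by
        funext ω
        simp only [Pi.mul_apply, hW, Finset.prod_insert hKS, Finset.prod_empty,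
          div_eq_mul_inv, one_mul]
        ring
      rw [heq]; exact hintegr _ _
    have hindK_int : Integrable (ind K) μ := (integrable_const (1 : ℝ)).indicator (hA K)
    haveI : SigmaFinite (μ.trim (hH K)) := by infer_instance
    have hpull := condExp_mul_of_stronglyMeasurable_left hWsm hWind hindK_int
    have h1 : ∫ ω, g k ω ∂μ = ∫ ω, (W * ind K) ω ∂μ := by
      refine integral_congr_ae (Filter.Eventually.of_forall fun ω => ?_)
      simp only [hg, hW, Pi.mul_apply, hfilter, Finset.prod_insert hKS, div_eq_mul_inv]
      ring
    have h2 : ∫ ω, (W * ind K) ω ∂μ = ∫ ω, (W * (μ[ind K | H K])) ω ∂μ := by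
      rw [← integral_condExp (hH K) (f := W * ind K)]
      exact integral_congr_ae hpull
    have h3 : ∫ ω, (W * (μ[ind K | H K])) ω ∂μ = ∫ ω, g (k + 1) ω ∂μ := by
      refine integral_congr_ae ?_
      filter_upwards [hbound K] with ω hω
      have hne : π K ω ≠ 0 := ne_of_gt (lt_of_lt_of_le hσ0 hω)
      have hcond : μ[ind K | H K] = π K := (hπ K).symm
      simp only [Pi.mul_apply, hcond]
      show (π K ω)⁻¹ * ((∏ i ∈ S, ind i ω / π i ω) * Y ω) * π K ω = g (k + 1) ω
      rw [mul_comm ((π K ω)⁻¹) _, mul_assoc, inv_mul_cancel₀ hne, mul_one]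
    rw [h1, h2, h3]
  have hchain : ∀ j, j ≤ m → ∫ ω, g (m - j) ω ∂μ = ∫ ω, Y ω ∂μ := by
    intro j
    induction j with
    | zero =>
      intro _
      have hempty : Finset.univ.filter (fun i : Fin m => m ≤ (i : ℕ)) = ∅ := by
        ext i
        simp only [Finset.mem_filter, Finset.mem_univ, true_and, Finset.notMem_empty,
          iff_false]
        have := i.isLt
        omega
      simp only [hg, Nat.sub_zero, hempty, Finset.prod_empty, one_mul]
    | succ j ih =>
      intro hj
      have hk : m - (j + 1) < m := by omega
      have hsub : m - (j + 1) + 1 = m - j := by omega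
      rw [hstep _ hk, hsub]
      exact ih (by omega)
  have hfinal := hchain m le_rfl
  rw [Nat.sub_self] at hfinal
  have huniv : Finset.univ.filter (fun i : Fin m => 0 ≤ (i : ℕ)) = Finset.univ := by
    simp
  simp only [hg, huniv] at hfinal
  exact hfinal
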